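/- Consider the transverse integrated eigenvalue system for σ = ∞: μ μ₀ w'' = μ₀ v̂ λ w + μ₀ v̂ w' - I α' and α' = I w' - λ α on ℝ, where v̂ : ℝ → ℝ is C¹ with v̂ > 0 and v̂' < 0 everywhere, and μ, μ₀ > 0, I ∈ ℝ, λ ∈ ℂ with Re λ ≥ 0 and λ ≠ 0. If (w, α) is a solution with w, w', w'', α, α' ∈ L²(ℝ) and w, w' → 0 at ±∞, then w ≡ 0. -/

import Mathlib

open MeasureTheory Filter Set

theorem aux_nonpos_limit_atTop {f : ℝ → ℝ} (hi : Integrable f) (h0 : ∀ x, 0 ≤ f x)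
    {c : ℝ} (hl : Tendsto f atTop (nhds c)) : c = 0 := by
  by_contra hc0
  have hc : 0 < c := lt_of_le_of_ne (ge_of_tendsto hl (Eventually.of_forall h0)) (Ne.symm hc0)
  have hev : ∀ᶠ x in atTop, c / 2 < f x := hl.eventually (lt_mem_nhds (half_lt_self hc))
  obtain ⟨A, hA⟩ := hev.exists_forall_of_atTop
  have hconst : IntegrableOn (fun _ : ℝ => c / 2) (Ici A) volume := by
    refine Integrable.mono' (hi.integrableOn) aestronglyMeasurable_const ?_
    filter_upwards [ae_restrict_mem measurableSet_Ici] with x hx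
    rw [Real.norm_of_nonneg (by positivity)]
    exact (hA x hx).le
  rw [integrableOn_const_iff] at hconst
  rcases hconst with h | h
  · exact absurd h (by simp [hc.ne'])
  · rw [Real.volume_Ici] at h; exact absurd h (by simp)

theorem aux_nonpos_limit_atBot {f : ℝ → ℝ} (hi : Integrable f) (h0 : ∀ x, 0 ≤ f x)
    {c : ℝ} (hl : Tendsto f atBot (nhds c)) : c = 0 := by
  by_contra hc0
  have hc : 0 < c := lt_of_le_of_ne (ge_of_tendsto hl (Eventually.of_forall h0)) (Ne.symm hc0)
  have hev : ∀ᶠ x in atBot, c / 2 < f x := hl.eventually (lt_mem_nhds (half_lt_self hc))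
  obtain ⟨A, hA⟩ := hev.exists_forall_of_atBot
  have hconst : IntegrableOn (fun _ : ℝ => c / 2) (Iic A) volume := by
    refine Integrable.mono' (hi.integrableOn) aestronglyMeasurable_const ?_
    filter_upwards [ae_restrict_mem measurableSet_Iic] with x hx
    rw [Real.norm_of_nonneg (by positivity)]
    exact (hA x hx).le
  rw [integrableOn_const_iff] at hconst
  rcases hconst with h | h
  · exact absurd h (by simp [hc.ne'])
  · rw [Real.volume_Iic] at h; exact absurd h (by simp)

theorem aux_tendsto_atBot {E : Type*} [NormedAddCommGroup E] [NormedSpace ℝ E] [CompleteSpace E]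
    {f f' : ℝ → E} (hd : ∀ x, HasDerivAt f (f' x) x) {X : ℝ}
    (hi : IntegrableOn f' (Iic X)) :
    Tendsto f atBot (nhds (f X - ∫ s in Iic X, f' s)) := by
  have key : ∀ a : ℝ, a ≤ X → f a = f X - ∫ s in a..X, f' s := by
    intro a ha
    have hint : IntervalIntegrable f' volume a X := by
      rw [intervalIntegrable_iff]
      rw [uIoc_of_le ha]
      exact hi.mono_set Ioc_subset_Iic_self
    have := intervalIntegral.integral_eq_sub_of_hasDerivAt (fun x _ => hd x) hint
    rw [this]; abel
  have h2 : Tendsto (fun a : ℝ => f X - ∫ s in a..X, f' s) atBot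
      (nhds (f X - ∫ s in Iic X, f' s)) :=
    (tendsto_const_nhds.sub (intervalIntegral_tendsto_integral_Iic X hi tendsto_id))
  refine h2.congr' ?_
  filter_upwards [eventually_le_atBot X] with a ha
  exact (key a ha).symm

theorem aux_tendsto_atTop {E : Type*} [NormedAddCommGroup E] [NormedSpace ℝ E] [CompleteSpace E]
    {f f' : ℝ → E} (hd : ∀ x, HasDerivAt f (f' x) x) {X : ℝ}
    (hi : IntegrableOn f' (Ioi X)) :
    Tendsto f atTop (nhds (f X + ∫ s in Ioi X, f' s)) := by
  have key : ∀ a : ℝ, X ≤ a → f a = f X + ∫ s in X..a, f' s := by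
    intro a ha
    have hint : IntervalIntegrable f' volume X a := by
      rw [intervalIntegrable_iff]
      rw [uIoc_of_le ha]
      exact hi.mono_set Ioc_subset_Ioi_self
    have := intervalIntegral.integral_eq_sub_of_hasDerivAt (fun x _ => hd x) hint
    rw [this]; abel
  have h2 : Tendsto (fun a : ℝ => f X + ∫ s in X..a, f' s) atTop
      (nhds (f X + ∫ s in Ioi X, f' s)) :=
    (tendsto_const_nhds.add (intervalIntegral_tendsto_integral_Ioi X hi tendsto_id))
  refine h2.congr' ?_
  filter_upwards [eventually_ge_atTop X] with a ha
  exact (key a ha).symm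

theorem aux_contra {lam : ℂ} (hre : 0 ≤ lam.re) (vh : ℝ → ℝ)
    (hvcont : Continuous vh) (hvpos : ∀ x, 0 < vh x)
    (hanti : Antitone vh)
    (w w' : ℝ → ℂ) (hw : ∀ x, HasDerivAt w (w' x) x) (hw'cont : Continuous w')
    (hvu2 : Integrable (fun x => (vh x * ‖lam * w x + w' x‖) ^ 2))
    (hIg : Integrable (fun x => ‖w x‖ ^ 2))
    (hwbot : Tendsto w atBot (nhds 0))
    {X δ : ℝ} (hδ : 0 < δ) (hh : ∀ x ≤ X, δ ≤ vh x * ‖w x‖ ^ 2) : False := by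
  have hwcont : Continuous w := continuous_iff_continuousAt.2 fun x => (hw x).continuousAt
  set u : ℝ → ℂ := fun x => lam * w x + w' x with hu
  have hucont : Continuous u := (continuous_const.mul hwcont).add hw'cont
  set nu : ℝ → ℝ := fun x => ‖u x‖ with hnu
  have hnucont : Continuous nu := hucont.norm
  have hnu0 : ∀ x, 0 ≤ nu x := fun x => norm_nonneg _
  have hvinvcont : Continuous (fun x => (vh x)⁻¹) := hvcont.inv₀ fun x => (hvpos x).ne'
  -- 1/vh integrable on Iic X
  have h1v : IntegrableOn (fun x => (vh x)⁻¹) (Iic X) volume := by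
    refine Integrable.mono' ((hIg.const_mul δ⁻¹).integrableOn) hvinvcont.aestronglyMeasurable ?_
    filter_upwards [ae_restrict_mem measurableSet_Iic] with x hx
    rw [Real.norm_of_nonneg (inv_nonneg.2 (hvpos x).le), inv_eq_one_div, div_le_iff₀ (hvpos x)]
    have h2 := hh x hx
    calc (1:ℝ) = δ⁻¹ * δ := by field_simp
      _ ≤ δ⁻¹ * (vh x * ‖w x‖ ^ 2) := mul_le_mul_of_nonneg_left h2 (inv_nonneg.2 hδ.le)
      _ = δ⁻¹ * ‖w x‖ ^ 2 * vh x := by ring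
  -- 1/vh² integrable on Iic X
  have h1v2 : IntegrableOn (fun x => ((vh x)⁻¹) ^ 2) (Iic X) volume := by
    refine Integrable.mono' (h1v.const_mul (vh X)⁻¹) (hvinvcont.pow 2).aestronglyMeasurable ?_
    filter_upwards [ae_restrict_mem measurableSet_Iic] with x hx
    rw [Real.norm_of_nonneg (by positivity)]
    have hle : (vh x)⁻¹ ≤ (vh X)⁻¹ := inv_anti₀ (hvpos X) (hanti hx)
    calc ((vh x)⁻¹) ^ 2 = (vh x)⁻¹ * (vh x)⁻¹ := sq ((vh x)⁻¹)
      _ ≤ (vh X)⁻¹ * (vh x)⁻¹ := mul_le_mul_of_nonneg_right hle (inv_nonneg.2 (hvpos x).le)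
  -- ‖u‖ integrable on Iic X
  have huI : IntegrableOn nu (Iic X) volume := by
    refine Integrable.mono' ((hvu2.integrableOn.add h1v2).const_mul (1/2))
      hnucont.aestronglyMeasurable ?_
    filter_upwards [] with x
    simp only [Pi.add_apply]
    rw [Real.norm_of_nonneg (hnu0 x)]
    have hvne : vh x ≠ 0 := (hvpos x).ne'
    have hx0 : nu x = (vh x * nu x) * (vh x)⁻¹ := by
      rw [mul_comm (vh x) (nu x), mul_assoc, mul_inv_cancel₀ hvne, mul_one]
    have hnueq : ‖lam * w x + w' x‖ = nu x := rfl
    rw [hnueq]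
    nlinarith [sq_nonneg (vh x * nu x - (vh x)⁻¹), hx0]
  -- z and its derivative
  set z : ℝ → ℂ := fun x => Complex.exp (lam * x) * w x with hzdef
  set z' : ℝ → ℂ := fun x => Complex.exp (lam * x) * u x with hz'def
  have hz'cont : Continuous z' :=
    (Complex.continuous_exp.comp (continuous_const.mul Complex.continuous_ofReal)).mul hucont
  have hz : ∀ x, HasDerivAt z (z' x) x := by
    intro x
    have h0 : HasDerivAt (fun y : ℝ => (y : ℂ)) 1 x := by
      simpa using (hasDerivAt_id x).ofReal_comp
    have h1 : HasDerivAt (fun y : ℝ => lam * (y : ℂ)) lam x := by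
      simpa using h0.const_mul lam
    have h2 := h1.cexp.mul (hw x)
    refine h2.congr_deriv (Eq.symm ?_)
    simp only [hz'def, hu]; ring
  have hznorm : ∀ x : ℝ, ‖z x‖ = Real.exp (lam.re * x) * ‖w x‖ := by
    intro x
    simp [hzdef, map_mul, Complex.norm_exp, Complex.mul_re]
  have hz'norm : ∀ x : ℝ, ‖z' x‖ = Real.exp (lam.re * x) * nu x := by
    intro x
    simp [hz'def, map_mul, Complex.norm_exp, Complex.mul_re, hnu]
  have hz'I : IntegrableOn z' (Iic X) volume := by
    refine Integrable.mono' (huI.const_mul (Real.exp (lam.re * X)))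
      hz'cont.aestronglyMeasurable.restrict ?_
    filter_upwards [ae_restrict_mem measurableSet_Iic] with s hs
    rw [hz'norm s]
    exact mul_le_mul_of_nonneg_right
      (Real.exp_le_exp.2 (mul_le_mul_of_nonneg_left hs hre)) (hnu0 s)
  have hz0 : Tendsto z atBot (nhds 0) := by
    rw [tendsto_zero_iff_norm_tendsto_zero]
    refine squeeze_zero' (Eventually.of_forall fun a => norm_nonneg _) ?_
      (tendsto_zero_iff_norm_tendsto_zero.1 hwbot)
    filter_upwards [eventually_le_atBot (0:ℝ)] with a ha
    rw [hznorm a]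
    calc Real.exp (lam.re * a) * ‖w a‖ ≤ 1 * ‖w a‖ :=
          mul_le_mul_of_nonneg_right
            (Real.exp_le_one_iff.2 (mul_nonpos_of_nonneg_of_nonpos hre ha)) (norm_nonneg _)
      _ = ‖w a‖ := one_mul _
  set A : ℝ := ∫ s in Iic X, (vh s)⁻¹ with hA
  have hA0 : 0 ≤ A := setIntegral_nonneg measurableSet_Iic fun s _ => inv_nonneg.2 (hvpos s).le
  -- main quantitative bound
  have key : ∀ x ≤ X, δ ≤ (∫ s in Iic x, (vh s * nu s) ^ 2) * A := by
    intro x hx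
    have hsub : Iic x ⊆ Iic X := Iic_subset_Iic.2 hx
    have hz'Ix : IntegrableOn z' (Iic x) volume := hz'I.mono_set hsub
    have h1 := aux_tendsto_atBot hz hz'Ix
    have hzx : z x = ∫ s in Iic x, z' s := eq_of_sub_eq_zero (tendsto_nhds_unique h1 hz0)
    have hn1 : ‖z x‖ ≤ ∫ s in Iic x, ‖z' s‖ := hzx ▸ norm_integral_le_integral_norm _
    have huIx : IntegrableOn nu (Iic x) volume := huI.mono_set hsub
    have hn2 : ∫ s in Iic x, ‖z' s‖ ≤ ∫ s in Iic x, Real.exp (lam.re * x) * nu s := by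
      refine setIntegral_mono_on hz'Ix.norm (huIx.const_mul _) measurableSet_Iic fun s hs => ?_
      rw [hz'norm s]
      exact mul_le_mul_of_nonneg_right
        (Real.exp_le_exp.2 (mul_le_mul_of_nonneg_left hs hre)) (hnu0 s)
    have hn3 : ‖w x‖ ≤ ∫ s in Iic x, nu s := by
      have e1 : ∫ s in Iic x, Real.exp (lam.re * x) * nu s
          = Real.exp (lam.re * x) * ∫ s in Iic x, nu s := integral_const_mul _ _
      have h4 : Real.exp (lam.re * x) * ‖w x‖ ≤ Real.exp (lam.re * x) * ∫ s in Iic x, nu s := by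
        rw [← hznorm x, ← e1]; exact hn1.trans hn2
      exact le_of_mul_le_mul_left h4 (Real.exp_pos _)
    have hvnuI2 : IntegrableOn (fun s => (vh s * nu s) ^ 2) (Iic x) volume := hvu2.integrableOn
    have h1v2x : IntegrableOn (fun s => ((vh s)⁻¹) ^ 2) (Iic x) volume := h1v2.mono_set hsub
    -- Cauchy-Schwarz
    have hconj : Real.HolderConjugate 2 2 := Real.HolderConjugate.two_two
    have hof2 : ENNReal.ofReal (2:ℝ) = 2 := by
      rw [ENNReal.ofReal_ofNat]
    have hf : MemLp (fun s => vh s * nu s) (ENNReal.ofReal 2) (volume.restrict (Iic x)) := by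
      rw [hof2]
      exact (memLp_two_iff_integrable_sq
        (hvcont.mul hnucont).aestronglyMeasurable.restrict).2 hvnuI2
    have hg : MemLp (fun s => (vh s)⁻¹) (ENNReal.ofReal 2) (volume.restrict (Iic x)) := by
      rw [hof2]
      exact (memLp_two_iff_integrable_sq hvinvcont.aestronglyMeasurable.restrict).2 h1v2x
    have hCS0 := integral_mul_le_Lp_mul_Lq_of_nonneg hconj
      (Eventually.of_forall fun s => mul_nonneg (hvpos s).le (hnu0 s))
      (Eventually.of_forall fun s => inv_nonneg.2 (hvpos s).le) hf hg
    have hint_eq : ∫ s in Iic x, (vh s * nu s) * (vh s)⁻¹ = ∫ s in Iic x, nu s := by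
      refine integral_congr_ae (Eventually.of_forall fun s => ?_)
      show vh s * nu s * (vh s)⁻¹ = nu s
      rw [mul_comm (vh s) (nu s), mul_assoc, mul_inv_cancel₀ (hvpos s).ne', mul_one]
    have hrpow2 : ∀ y : ℝ, 0 ≤ y → y ^ (2:ℝ) = y ^ 2 := by
      intro y hy
      rw [show (2:ℝ) = ((2:ℕ):ℝ) by norm_num, Real.rpow_natCast]
    have hCS : ∫ s in Iic x, nu s ≤
        Real.sqrt (∫ s in Iic x, (vh s * nu s) ^ 2) *
        Real.sqrt (∫ s in Iic x, ((vh s)⁻¹) ^ 2) := by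
      rw [Real.sqrt_eq_rpow, Real.sqrt_eq_rpow]
      calc ∫ s in Iic x, nu s = ∫ s in Iic x, (vh s * nu s) * (vh s)⁻¹ := hint_eq.symm
        _ ≤ (∫ s in Iic x, (vh s * nu s) ^ (2:ℝ)) ^ ((1:ℝ)/2) *
            (∫ s in Iic x, ((vh s)⁻¹) ^ (2:ℝ)) ^ ((1:ℝ)/2) := hCS0
        _ = (∫ s in Iic x, (vh s * nu s) ^ 2) ^ ((1:ℝ)/2) *
            (∫ s in Iic x, ((vh s)⁻¹) ^ 2) ^ ((1:ℝ)/2) := by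
            congr 2
            · exact integral_congr_ae (Eventually.of_forall fun s =>
                hrpow2 _ (mul_nonneg (hvpos s).le (hnu0 s)))
            · exact integral_congr_ae (Eventually.of_forall fun s =>
                hrpow2 _ (inv_nonneg.2 (hvpos s).le))
    have hS2 : ∫ s in Iic x, ((vh s)⁻¹) ^ 2 ≤ (vh x)⁻¹ * A := by
      calc ∫ s in Iic x, ((vh s)⁻¹) ^ 2 ≤ ∫ s in Iic x, (vh x)⁻¹ * (vh s)⁻¹ := by
            refine setIntegral_mono_on h1v2x ((h1v.mono_set hsub).const_mul _)
              measurableSet_Iic fun s hs => ?_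
            have hle : (vh s)⁻¹ ≤ (vh x)⁻¹ := inv_anti₀ (hvpos x) (hanti hs)
            calc ((vh s)⁻¹) ^ 2 = (vh s)⁻¹ * (vh s)⁻¹ := sq _
              _ ≤ (vh x)⁻¹ * (vh s)⁻¹ := mul_le_mul_of_nonneg_right hle (inv_nonneg.2 (hvpos s).le)
        _ = (vh x)⁻¹ * ∫ s in Iic x, (vh s)⁻¹ := integral_const_mul _ _
        _ ≤ (vh x)⁻¹ * A := by
            refine mul_le_mul_of_nonneg_left ?_ (inv_nonneg.2 (hvpos x).le)
            refine setIntegral_mono_set h1v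
              (Eventually.of_forall fun s => inv_nonneg.2 (hvpos s).le) hsub.eventuallyLE
    set T : ℝ := ∫ s in Iic x, (vh s * nu s) ^ 2 with hT
    have hT0 : 0 ≤ T := setIntegral_nonneg measurableSet_Iic fun s _ => sq_nonneg _
    have hC0 : 0 ≤ (vh x)⁻¹ * A := mul_nonneg (inv_nonneg.2 (hvpos x).le) hA0
    have hS20 : 0 ≤ ∫ s in Iic x, ((vh s)⁻¹) ^ 2 :=
      setIntegral_nonneg measurableSet_Iic fun s _ => sq_nonneg _
    have hwle : ‖w x‖ ≤ Real.sqrt T * Real.sqrt ((vh x)⁻¹ * A) :=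
      hn3.trans (hCS.trans (mul_le_mul_of_nonneg_left (Real.sqrt_le_sqrt hS2)
        (Real.sqrt_nonneg _)))
    have h5 : ‖w x‖ ^ 2 ≤ T * ((vh x)⁻¹ * A) := by
      have h6 := mul_self_le_mul_self (norm_nonneg (w x)) hwle
      calc ‖w x‖ ^ 2 = ‖w x‖ * ‖w x‖ := sq _
        _ ≤ (Real.sqrt T * Real.sqrt ((vh x)⁻¹ * A)) *
            (Real.sqrt T * Real.sqrt ((vh x)⁻¹ * A)) := h6
        _ = (Real.sqrt T * Real.sqrt T) *
            (Real.sqrt ((vh x)⁻¹ * A) * Real.sqrt ((vh x)⁻¹ * A)) := by ring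
        _ = T * ((vh x)⁻¹ * A) := by rw [Real.mul_self_sqrt hT0, Real.mul_self_sqrt hC0]
    have h6 := hh x hx
    have h7 : vh x * ‖w x‖ ^ 2 ≤ vh x * (T * ((vh x)⁻¹ * A)) :=
      mul_le_mul_of_nonneg_left h5 (hvpos x).le
    have h8 : vh x * (T * ((vh x)⁻¹ * A)) = T * A := by
      rw [show vh x * (T * ((vh x)⁻¹ * A)) = (vh x * (vh x)⁻¹) * (T * A) by ring,
        mul_inv_cancel₀ (hvpos x).ne', one_mul]
    linarith
  -- the tail integral tends to zero
  have hTtend : Tendsto (fun x => ∫ s in Iic x, (vh s * nu s) ^ 2) atBot (nhds 0) := by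
    have hint := intervalIntegral_tendsto_integral_Iic X hvu2.integrableOn tendsto_id
    have heq : ∀ a ≤ X, ∫ s in Iic a, (vh s * nu s) ^ 2
        = (∫ s in Iic X, (vh s * nu s) ^ 2) - ∫ s in a..X, (vh s * nu s) ^ 2 := by
      intro a ha
      rw [intervalIntegral.integral_of_le ha, ← Iic_union_Ioc_eq_Iic ha,
        setIntegral_union (Iic_disjoint_Ioc le_rfl) measurableSet_Ioc
          hvu2.integrableOn hvu2.integrableOn]
      ring
    have h2 : Tendsto (fun a : ℝ => (∫ s in Iic X, (vh s * nu s) ^ 2)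
        - ∫ s in a..X, (vh s * nu s) ^ 2) atBot
        (nhds ((∫ s in Iic X, (vh s * nu s) ^ 2) - ∫ s in Iic X, (vh s * nu s) ^ 2)) :=
      tendsto_const_nhds.sub hint
    rw [sub_self] at h2
    refine h2.congr' ?_
    filter_upwards [eventually_le_atBot X] with a ha
    exact (heq a ha).symm
  have hfin : ∀ᶠ x in atBot, (∫ s in Iic x, (vh s * nu s) ^ 2) * A < δ :=
    (hTtend.mul_const A).eventually (by rw [zero_mul]; exact gt_mem_nhds hδ)
  obtain ⟨x, hx1, hx2⟩ := (hfin.and (eventually_le_atBot X)).exists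
  exact absurd (key x hx2) (not_le.2 hx1)


set_option maxHeartbeats 1000000 in
theorem stmt8 (μ μ₀ I : ℝ) (hμ : 0 < μ) (hμ₀ : 0 < μ₀)
    (lam : ℂ) (hre : 0 ≤ lam.re) (hlam : lam ≠ 0)
    (vh vh' : ℝ → ℝ)
    (hvh : ∀ x, HasDerivAt vh (vh' x) x)
    (hvh'cont : Continuous vh')
    (hvhpos : ∀ x, 0 < vh x) (hvh'neg : ∀ x, vh' x < 0)
    (w w' w'' α α' : ℝ → ℂ)
    (hw : ∀ x, HasDerivAt w (w' x) x)
    (hw' : ∀ x, HasDerivAt w' (w'' x) x)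
    (hα : ∀ x, HasDerivAt α (α' x) x)
    (heq1 : ∀ x, (↑(μ * μ₀) : ℂ) * w'' x =
      (↑(μ₀ * vh x) : ℂ) * lam * w x + (↑(μ₀ * vh x) : ℂ) * w' x - (↑I : ℂ) * α' x)
    (heq2 : ∀ x, α' x = (↑I : ℂ) * w' x - lam * α x)
    (hL2w : MemLp w 2 volume) (hL2w' : MemLp w' 2 volume)
    (hL2w'' : MemLp w'' 2 volume)
    (hL2α : MemLp α 2 volume) (hL2α' : MemLp α' 2 volume)
    (hwtop : Tendsto w atTop (nhds 0)) (hwbot : Tendsto w atBot (nhds 0))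
    (hw'top : Tendsto w' atTop (nhds 0)) (hw'bot : Tendsto w' atBot (nhds 0)) :
    ∀ x, w x = 0 := by
  -- basic continuity facts
  have hwc : Continuous w := continuous_iff_continuousAt.2 fun x => (hw x).continuousAt
  have hw'c : Continuous w' := continuous_iff_continuousAt.2 fun x => (hw' x).continuousAt
  have hαc : Continuous α := continuous_iff_continuousAt.2 fun x => (hα x).continuousAt
  have hvc : Continuous vh := continuous_iff_continuousAt.2 fun x => (hvh x).continuousAt
  have hα'c : Continuous α' := by
    have h : α' = fun x => (↑I : ℂ) * w' x - lam * α x := funext heq2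
    rw [h]
    exact (continuous_const.mul hw'c).sub (continuous_const.mul hαc)
  -- norm-square identity
  have hnsq : ∀ z : ℂ, z.re ^ 2 + z.im ^ 2 = ‖z‖ ^ 2 := by
    intro z
    rw [Complex.sq_norm, Complex.normSq_apply]
    ring
  -- derivative of real and imaginary parts
  have hDre : ∀ (f f' : ℝ → ℂ), (∀ y, HasDerivAt f (f' y) y) →
      ∀ x : ℝ, HasDerivAt (fun y => (f y).re) ((f' x).re) x := fun f f' hf x =>
    Complex.reCLM.hasFDerivAt.comp_hasDerivAt x (hf x)
  have hDim : ∀ (f f' : ℝ → ℂ), (∀ y, HasDerivAt f (f' y) y) →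
      ∀ x : ℝ, HasDerivAt (fun y => (f y).im) ((f' x).im) x := fun f f' hf x =>
    Complex.imCLM.hasFDerivAt.comp_hasDerivAt x (hf x)
  -- antitonicity of vh
  have hanti : Antitone vh := by
    refine (strictAnti_of_deriv_neg fun x => ?_).antitone
    rw [(hvh x).deriv]; exact hvh'neg x
  -- square integrability of various quantities
  have hIα2 : Integrable (fun x => ‖α x‖ ^ 2) volume := hL2α.norm.integrable_sq
  have hIα'2 : Integrable (fun x => ‖α' x‖ ^ 2) volume := hL2α'.norm.integrable_sq
  have hIg : Integrable (fun x => ‖w x‖ ^ 2) volume := hL2w.norm.integrable_sq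
  -- φ = |α|² and its limits
  obtain ⟨φ, hφdef⟩ : ∃ f : ℝ → ℝ, f = fun x => (α x).re ^ 2 + (α x).im ^ 2 := ⟨_, rfl⟩
  obtain ⟨φ', hφ'def⟩ : ∃ f : ℝ → ℝ, f = fun x =>
    2 * ((α x).re * (α' x).re + (α x).im * (α' x).im) := ⟨_, rfl⟩
  have hφd : ∀ x, HasDerivAt φ (φ' x) x := by
    intro x
    have h1 := ((hDre α α' hα x).pow 2).add ((hDim α α' hα x).pow 2)
    rw [hφdef, hφ'def]
    refine h1.congr_deriv (Eq.symm ?_)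
    simp only
    push_cast
    ring
  have hφnn : ∀ x, 0 ≤ φ x := fun x => by simp only [hφdef]; positivity
  have hφint : Integrable φ volume := by
    rw [hφdef]
    exact hIα2.congr (Eventually.of_forall fun x => (hnsq (α x)).symm)
  have hφ'int : Integrable φ' volume := by
    refine Integrable.mono' (hIα2.add hIα'2) ?_ ?_
    · exact Continuous.aestronglyMeasurable (by
        rw [hφ'def]; show Continuous _
        exact continuous_const.mul
          (((Complex.continuous_re.comp hαc).mul (Complex.continuous_re.comp hα'c)).add
            ((Complex.continuous_im.comp hαc).mul (Complex.continuous_im.comp hα'c))))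
    · filter_upwards [] with x
      have hb : |2 * ((α x).re * (α' x).re + (α x).im * (α' x).im)| ≤
          ((α x).re ^ 2 + (α x).im ^ 2) + ((α' x).re ^ 2 + (α' x).im ^ 2) := by
        rw [abs_le]
        constructor
        · nlinarith [sq_nonneg ((α x).re + (α' x).re), sq_nonneg ((α x).im + (α' x).im)]
        · nlinarith [sq_nonneg ((α x).re - (α' x).re), sq_nonneg ((α x).im - (α' x).im)]
      simp only [Pi.add_apply, Real.norm_eq_abs, hφ'def]
      rw [hnsq (α x), hnsq (α' x)] at hb
      exact hb
  have hφtop : Tendsto φ atTop (nhds 0) := by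
    have h1 := aux_tendsto_atTop hφd (hφ'int.integrableOn (s := Ioi 0))
    have h2 := aux_nonpos_limit_atTop hφint hφnn h1
    rwa [h2] at h1
  have hφbot : Tendsto φ atBot (nhds 0) := by
    have h1 := aux_tendsto_atBot hφd (hφ'int.integrableOn (s := Iic 0))
    have h2 := aux_nonpos_limit_atBot hφint hφnn h1
    rwa [h2] at h1
  have hαnorm : ∀ x, ‖α x‖ = Real.sqrt (φ x) := by
    intro x
    simp only [hφdef]
    rw [hnsq (α x), Real.sqrt_sq (norm_nonneg _)]
  have hαtop : Tendsto α atTop (nhds 0) := by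
    rw [tendsto_zero_iff_norm_tendsto_zero]
    have h1 : Tendsto (fun x => Real.sqrt (φ x)) atTop (nhds 0) := by
      have := (Real.continuous_sqrt.tendsto 0).comp hφtop
      simpa [Function.comp_def] using this
    exact h1.congr fun x => (hαnorm x).symm
  have hαbot : Tendsto α atBot (nhds 0) := by
    rw [tendsto_zero_iff_norm_tendsto_zero]
    have h1 : Tendsto (fun x => Real.sqrt (φ x)) atBot (nhds 0) := by
      have := (Real.continuous_sqrt.tendsto 0).comp hφbot
      simpa [Function.comp_def] using this
    exact h1.congr fun x => (hαnorm x).symm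
  -- component limits
  have hcomp : ∀ (f : ℝ → ℂ) (l : Filter ℝ), Tendsto f l (nhds 0) →
      (Tendsto (fun x => (f x).re) l (nhds 0) ∧ Tendsto (fun x => (f x).im) l (nhds 0)) := by
    intro f l hf
    constructor
    · have := (Complex.continuous_re.tendsto 0).comp hf; simpa [Function.comp_def] using this
    · have := (Complex.continuous_im.tendsto 0).comp hf; simpa [Function.comp_def] using this
  obtain ⟨hwret, hwimt⟩ := hcomp w atTop hwtop
  obtain ⟨hwreb, hwimb⟩ := hcomp w atBot hwbot
  obtain ⟨hw'ret, hw'imt⟩ := hcomp w' atTop hw'top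
  obtain ⟨hw'reb, hw'imb⟩ := hcomp w' atBot hw'bot
  obtain ⟨hαret, hαimt⟩ := hcomp α atTop hαtop
  obtain ⟨hαreb, hαimb⟩ := hcomp α atBot hαbot
  -- the energy functional F and its derivative Q
  obtain ⟨F, hFdef⟩ : ∃ f : ℝ → ℝ, f = fun x =>
      μ * μ₀ * ((w x).re * (w' x).re + (w x).im * (w' x).im)
      - μ₀ / 2 * (vh x * ((w x).re ^ 2 + (w x).im ^ 2))
      + I * ((w x).re * (α x).re + (w x).im * (α x).im)
      - 1 / 2 * ((α x).re ^ 2 + (α x).im ^ 2) := ⟨_, rfl⟩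
  obtain ⟨Q, hQdef⟩ : ∃ f : ℝ → ℝ, f = fun x =>
      μ * μ₀ * ((w' x).re ^ 2 + (w' x).im ^ 2)
      + lam.re * μ₀ * (vh x * ((w x).re ^ 2 + (w x).im ^ 2))
      + μ₀ / 2 * (-vh' x * ((w x).re ^ 2 + (w x).im ^ 2))
      + lam.re * ((α x).re ^ 2 + (α x).im ^ 2) := ⟨_, rfl⟩
  have hQ0 : ∀ x, 0 ≤ Q x := by
    intro x
    simp only [hQdef]
    have h1 : 0 ≤ μ * μ₀ * ((w' x).re ^ 2 + (w' x).im ^ 2) :=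
      mul_nonneg (mul_nonneg hμ.le hμ₀.le) (by positivity)
    have h2 : 0 ≤ lam.re * μ₀ * (vh x * ((w x).re ^ 2 + (w x).im ^ 2)) :=
      mul_nonneg (mul_nonneg hre hμ₀.le) (mul_nonneg (hvhpos x).le (by positivity))
    have h3 : 0 ≤ μ₀ / 2 * (-vh' x * ((w x).re ^ 2 + (w x).im ^ 2)) :=
      mul_nonneg (by positivity) (mul_nonneg (neg_nonneg.2 (hvh'neg x).le) (by positivity))
    have h4 : 0 ≤ lam.re * ((α x).re ^ 2 + (α x).im ^ 2) := mul_nonneg hre (by positivity)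
    linarith
  have hFd : ∀ x, HasDerivAt F (Q x) x := by
    intro x
    have war := hDre w w' hw x
    have wai := hDim w w' hw x
    have w'ar := hDre w' w'' hw' x
    have w'ai := hDim w' w'' hw' x
    have αar := hDre α α' hα x
    have αai := hDim α α' hα x
    have hv := hvh x
    have hA := (war.mul w'ar).add (wai.mul w'ai)
    have hB := hv.mul ((war.pow 2).add (wai.pow 2))
    have hC := (war.mul αar).add (wai.mul αai)
    have hD := (αar.pow 2).add (αai.pow 2)
    have H := (((hA.const_mul (μ * μ₀)).sub (hB.const_mul (μ₀ / 2))).add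
      (hC.const_mul I)).sub (hD.const_mul (1 / 2 : ℝ))
    simp only [hFdef, hQdef]
    refine H.congr_deriv (Eq.symm ?_)
    obtain ⟨e1r, e1i⟩ := Complex.ext_iff.mp (heq1 x)
    obtain ⟨e2r, e2i⟩ := Complex.ext_iff.mp (heq2 x)
    simp only [Complex.add_re, Complex.sub_re, Complex.mul_re, Complex.mul_im, Complex.add_im,
      Complex.sub_im, Complex.ofReal_re, Complex.ofReal_im, zero_mul, mul_zero, sub_zero,
      zero_sub, add_zero, zero_add, neg_zero] at e1r e1i e2r e2i
    push_cast [Pi.add_apply, Pi.pow_apply]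
    linear_combination (-(w x).re) * e1r + (-(w x).im) * e1i + (α x).re * e2r + (α x).im * e2i
  -- F is monotone
  have hMono : Monotone F :=
    monotone_of_deriv_nonneg (fun x => (hFd x).differentiableAt)
      (fun x => by rw [(hFd x).deriv]; exact hQ0 x)
  -- F tends to 0 at +∞
  have hsqt : ∀ {f : ℝ → ℝ} {l : Filter ℝ}, Tendsto f l (nhds 0) →
      Tendsto (fun x => f x ^ 2) l (nhds 0) := by
    intro f l hf
    have := hf.mul hf
    simpa [pow_two] using this
  have T1top : Tendsto (fun x =>
      μ * μ₀ * ((w x).re * (w' x).re + (w x).im * (w' x).im)) atTop (nhds 0) := by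
    have := ((hwret.mul hw'ret).add (hwimt.mul hw'imt)).const_mul (μ * μ₀)
    simpa using this
  have hgsqtop : Tendsto (fun x => (w x).re ^ 2 + (w x).im ^ 2) atTop (nhds 0) := by
    have := (hsqt hwret).add (hsqt hwimt)
    simpa using this
  have T2top : Tendsto (fun x =>
      μ₀ / 2 * (vh x * ((w x).re ^ 2 + (w x).im ^ 2))) atTop (nhds 0) := by
    refine squeeze_zero' (g := fun x => μ₀ / 2 * (vh 0 * ((w x).re ^ 2 + (w x).im ^ 2)))
      ?_ ?_ ?_
    · filter_upwards [] with x
      exact mul_nonneg (by positivity) (mul_nonneg (hvhpos x).le (by positivity))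
    · filter_upwards [eventually_ge_atTop (0:ℝ)] with x hx
      have hv0 : vh x ≤ vh 0 := hanti hx
      refine mul_le_mul_of_nonneg_left ?_ (by positivity)
      exact mul_le_mul_of_nonneg_right hv0 (by positivity)
    · have := (hgsqtop.const_mul (vh 0)).const_mul (μ₀ / 2)
      simpa using this
  have T3top : Tendsto (fun x =>
      I * ((w x).re * (α x).re + (w x).im * (α x).im)) atTop (nhds 0) := by
    have := ((hwret.mul hαret).add (hwimt.mul hαimt)).const_mul I
    simpa using this
  have T4top : Tendsto (fun x =>
      (1:ℝ) / 2 * ((α x).re ^ 2 + (α x).im ^ 2)) atTop (nhds 0) := by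
    have := ((hsqt hαret).add (hsqt hαimt)).const_mul ((1:ℝ)/2)
    simpa using this
  have hFtop : Tendsto F atTop (nhds 0) := by
    rw [hFdef]
    have := ((T1top.sub T2top).add T3top).sub T4top
    simpa using this
  have hFle : ∀ x, F x ≤ 0 := fun x => hMono.ge_of_tendsto hFtop x
  -- the "s" part of F tends to 0 at -∞
  have hsbot : Tendsto (fun x =>
      μ * μ₀ * ((w x).re * (w' x).re + (w x).im * (w' x).im)
      + I * ((w x).re * (α x).re + (w x).im * (α x).im)
      - 1 / 2 * ((α x).re ^ 2 + (α x).im ^ 2)) atBot (nhds 0) := by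
    have T1 : Tendsto (fun x =>
        μ * μ₀ * ((w x).re * (w' x).re + (w x).im * (w' x).im)) atBot (nhds 0) := by
      have := ((hwreb.mul hw'reb).add (hwimb.mul hw'imb)).const_mul (μ * μ₀)
      simpa using this
    have T3 : Tendsto (fun x =>
        I * ((w x).re * (α x).re + (w x).im * (α x).im)) atBot (nhds 0) := by
      have := ((hwreb.mul hαreb).add (hwimb.mul hαimb)).const_mul I
      simpa using this
    have T4 : Tendsto (fun x =>
        (1:ℝ) / 2 * ((α x).re ^ 2 + (α x).im ^ 2)) atBot (nhds 0) := by
      have := ((hsqt hαreb).add (hsqt hαimb)).const_mul ((1:ℝ)/2)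
      simpa using this
    have := (T1.add T3).sub T4
    simpa using this
  -- square-integrability input for aux_contra
  have hvu2 : Integrable (fun x => (vh x * ‖lam * w x + w' x‖) ^ 2) volume := by
    have hμ₀ne : (μ₀ : ℂ) ≠ 0 := by exact_mod_cast hμ₀.ne'
    set W : ℝ → ℂ := fun x => (↑μ : ℂ) * w'' x + (↑(I / μ₀) : ℂ) * α' x with hWdef
    have hWL2 : MemLp W 2 volume := (hL2w''.const_mul _).add (hL2α'.const_mul _)
    have hWsq : Integrable (fun x => ‖W x‖ ^ 2) volume := hWL2.norm.integrable_sq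
    refine hWsq.congr (Eventually.of_forall fun x => ?_)
    show ‖W x‖ ^ 2 = (vh x * ‖lam * w x + w' x‖) ^ 2
    have hWx : W x = (↑(vh x) : ℂ) * (lam * w x + w' x) := by
      rw [hWdef]
      have h := heq1 x
      push_cast at h ⊢
      field_simp
      linear_combination h
    rw [hWx, norm_mul, Complex.norm_real, Real.norm_of_nonneg (hvhpos x).le]
  -- F is nonnegative (otherwise contradiction at -∞)
  have hF0 : ∀ x, 0 ≤ F x := by
    by_contra hcon
    push_neg at hcon
    obtain ⟨x₀, hx₀⟩ := hcon
    have hδ : 0 < -F x₀ / μ₀ := div_pos (by linarith) hμ₀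
    have hev := hsbot.eventually (lt_mem_nhds (show F x₀ / 2 < (0:ℝ) by linarith))
    obtain ⟨X, hX⟩ := (hev.and (eventually_le_atBot x₀)).exists_forall_of_atBot
    have hh : ∀ x ≤ X, -F x₀ / μ₀ ≤ vh x * ‖w x‖ ^ 2 := by
      intro x hx
      obtain ⟨hs, hxx₀⟩ := hX x hx
      have hFx : F x ≤ F x₀ := hMono hxx₀
      have hFxval : F x =
          μ * μ₀ * ((w x).re * (w' x).re + (w x).im * (w' x).im)
          - μ₀ / 2 * (vh x * ((w x).re ^ 2 + (w x).im ^ 2))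
          + I * ((w x).re * (α x).re + (w x).im * (α x).im)
          - 1 / 2 * ((α x).re ^ 2 + (α x).im ^ 2) := by simp only [hFdef]
      have hkey : μ₀ / 2 * (vh x * ((w x).re ^ 2 + (w x).im ^ 2)) ≥ -F x₀ / 2 := by
        linarith [hFxval, hs, hFx]
      have hnw : (w x).re ^ 2 + (w x).im ^ 2 = ‖w x‖ ^ 2 := hnsq (w x)
      rw [div_le_iff₀ hμ₀]
      rw [hnw] at hkey
      calc -F x₀ ≤ 2 * (μ₀ / 2 * (vh x * ‖w x‖ ^ 2)) := by linarith [hkey]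
        _ = vh x * ‖w x‖ ^ 2 * μ₀ := by ring
    exact aux_contra hre vh hvc hvhpos hanti w w' hw hw'c hvu2 hIg hwbot hδ hh
  have hFeq : ∀ x, F x = 0 := fun x => le_antisymm (hFle x) (hF0 x)
  -- conclude Q ≡ 0 hence w ≡ 0
  have hQzero : ∀ x, Q x = 0 := by
    intro x
    have hzero : HasDerivAt F 0 x := by
      have hFfun : F = fun _ => (0:ℝ) := funext hFeq
      rw [hFfun]
      exact hasDerivAt_const x 0
    exact ((hzero.unique (hFd x))).symm
  intro x
  have hQx := hQzero x
  simp only [hQdef] at hQx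
  have h1 : 0 ≤ μ * μ₀ * ((w' x).re ^ 2 + (w' x).im ^ 2) :=
    mul_nonneg (mul_nonneg hμ.le hμ₀.le) (by positivity)
  have h2 : 0 ≤ lam.re * μ₀ * (vh x * ((w x).re ^ 2 + (w x).im ^ 2)) :=
    mul_nonneg (mul_nonneg hre hμ₀.le) (mul_nonneg (hvhpos x).le (by positivity))
  have h4 : 0 ≤ lam.re * ((α x).re ^ 2 + (α x).im ^ 2) := mul_nonneg hre (by positivity)
  have h6 : 0 < -vh' x := by linarith [hvh'neg x]
  have h5 : -vh' x * ((w x).re ^ 2 + (w x).im ^ 2) ≤ 0 := by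
    have ht3 : μ₀ / 2 * (-vh' x * ((w x).re ^ 2 + (w x).im ^ 2)) ≤ μ₀ / 2 * 0 := by
      rw [mul_zero]; linarith [h1, h2, h4, hQx]
    exact le_of_mul_le_mul_left ht3 (by positivity)
  have h7 : (w x).re ^ 2 + (w x).im ^ 2 ≤ 0 := by
    have h5' : -vh' x * ((w x).re ^ 2 + (w x).im ^ 2) ≤ -vh' x * 0 := by
      rw [mul_zero]; exact h5
    exact le_of_mul_le_mul_left h5' h6
  have h9 : (w x).re ^ 2 = 0 :=
    le_antisymm (by linarith [sq_nonneg (w x).im]) (sq_nonneg _)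
  have h10 : (w x).im ^ 2 = 0 :=
    le_antisymm (by linarith [sq_nonneg (w x).re]) (sq_nonneg _)
  exact Complex.ext ((pow_eq_zero_iff two_ne_zero).mp h9) ((pow_eq_zero_iff two_ne_zero).mp h10)
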